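/- Multiplicativity of the zeta series over disjoint unions: let G be a finite group, X a finite G-set, and Y ⊆ X a G-invariant subset. For each n let G_n = G ≀ S_n = G^n ⋊ S_n act on X^n by ((g₁,...,g_n),s)·(x₁,...,x_n) = (g₁ x_{s^{-1}(1)},...,g_n x_{s^{-1}(n)}). Then for all n ≥ 0: χ^{(A)}(X^n, G_n) = Σ_{s=0}^{n} χ^{(A)}(Y^s, G_s) · χ^{(A)}((X∖Y)^{n−s}, G_{n−s}). Equivalently, ζ^{(A)}_{(X,G)}(t) = ζ^{(A)}_{(Y,G)}(t) · ζ^{(A)}_{(X∖Y,G)}(t) as formal power series, where ζ^{(A)}_{(X,G)}(t) = 1 + Σ_{n≥1} χ^{(A)}(X^n,G_n) t^n. -/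

import Mathlib

open scoped BigOperators

/-- The `A`-Euler characteristic of an `H`-set `Z`:
`χ^{(A)}(Z,H) = (1/|H|) · Σ_{φ ∈ Hom(A,H)} |Z^{φ(A)}|`. -/
noncomputable def chiA (A H Z : Type*) [Group A] [Group H] [MulAction H Z] : ℚ :=
  (Nat.card H : ℚ)⁻¹ * ∑ᶠ φ : A →* H, (Nat.card {z : Z // ∀ a : A, φ a • z = z} : ℚ)

/-- The wreath product `G ≀ S_n`, as pairs `((g₁,…,g_n), s)` with multiplication
`((g),s)((g'),s') = ((gᵢ g'_{s⁻¹(i)}), ss')`. -/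
@[ext]
structure Wr (G : Type*) (n : ℕ) where
  g : Fin n → G
  s : Equiv.Perm (Fin n)

namespace Wr

variable {G : Type*} [Group G] {n : ℕ}

instance : Mul (Wr G n) :=
  ⟨fun p q => ⟨fun i => p.g i * q.g (p.s⁻¹ i), p.s * q.s⟩⟩

instance : One (Wr G n) := ⟨⟨1, 1⟩⟩

instance : Inv (Wr G n) := ⟨fun p => ⟨fun i => (p.g (p.s i))⁻¹, p.s⁻¹⟩⟩

@[simp] lemma mul_g (p q : Wr G n) : (p * q).g = fun i => p.g i * q.g (p.s⁻¹ i) := rfl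
@[simp] lemma mul_s (p q : Wr G n) : (p * q).s = p.s * q.s := rfl
@[simp] lemma one_g : (1 : Wr G n).g = 1 := rfl
@[simp] lemma one_s : (1 : Wr G n).s = 1 := rfl
@[simp] lemma inv_g (p : Wr G n) : p⁻¹.g = fun i => (p.g (p.s i))⁻¹ := rfl
@[simp] lemma inv_s (p : Wr G n) : p⁻¹.s = p.s⁻¹ := rfl

instance : Group (Wr G n) where
  mul_assoc p q t := by
    ext i
    · simp [mul_assoc, Equiv.Perm.mul_apply]
    · simp [mul_assoc]
  one_mul p := by ext i <;> simp
  mul_one p := by ext i <;> simp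
  inv_mul_cancel p := by
    ext i
    · simp
    · simp

variable {X : Type*} [MulAction G X]

/-- The action of `G ≀ S_n` on `X^n`:
`((g₁,…,g_n),s)·(x₁,…,x_n) = (g₁ x_{s⁻¹(1)},…,g_n x_{s⁻¹(n)})`. -/
instance : SMul (Wr G n) (Fin n → X) :=
  ⟨fun p x => fun i => p.g i • x (p.s⁻¹ i)⟩

@[simp] lemma smul_apply (p : Wr G n) (x : Fin n → X) (i : Fin n) :
    (p • x) i = p.g i • x (p.s⁻¹ i) := rfl

instance : MulAction (Wr G n) (Fin n → X) where
  one_smul x := by funext i; simp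
  mul_smul p q x := by
    funext i
    simp [mul_smul, Equiv.Perm.mul_apply]

end Wr

/-- The action of `G` on a `G`-invariant subset `Y ⊆ X`. -/
def setMulAction {G X : Type*} [Group G] [MulAction G X] (Y : Set X)
    (hY : ∀ (g : G) (x : X), x ∈ Y → g • x ∈ Y) : MulAction G Y where
  smul g y := ⟨g • (y : X), hY g y y.2⟩
  one_smul y := Subtype.ext (one_smul G (y : X))
  mul_smul g h y := Subtype.ext (mul_smul g h (y : X))

/-- The complement of a `G`-invariant subset is `G`-invariant. -/
lemma compl_invariant {G X : Type*} [Group G] [MulAction G X] (Y : Set X)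
    (hY : ∀ (g : G) (x : X), x ∈ Y → g • x ∈ Y) :
    ∀ (g : G) (x : X), x ∈ Yᶜ → g • x ∈ Yᶜ := by
  intro g x hx hmem
  exact hx (by simpa using hY g⁻¹ (g • x) hmem)

namespace ZetaAux

open Equiv

/-! ### Finiteness of hom sets -/

lemma finite_hom (A H : Type*) [Group A] [Group.FG A] [Group H] [Finite H] :
    Finite (A →* H) := by
  obtain ⟨S, hS⟩ := Group.fg_iff.mp ‹Group.FG A›
  haveI : Finite ↥S := hS.2.to_subtype
  have hinj : Function.Injective (fun φ : A →* H => (fun s : ↥S => φ s.1)) := by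
    intro φ ψ h
    exact MonoidHom.eq_of_eqOn_dense hS.1 (fun x hx => congrFun h ⟨x, hx⟩)
  exact Finite.of_injective _ hinj

/-! ### Wreath products over an arbitrary index type -/

structure WrE (G ι : Type*) where
  g : ι → G
  s : Equiv.Perm ι

namespace WrE

variable {G ι κ : Type*} [Group G]

@[ext] lemma ext {p q : WrE G ι} (h1 : p.g = q.g) (h2 : p.s = q.s) : p = q := by
  cases p; cases q; cases h1; cases h2; rfl

instance : Mul (WrE G ι) := ⟨fun p q => ⟨fun i => p.g i * q.g (p.s⁻¹ i), p.s * q.s⟩⟩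
instance : One (WrE G ι) := ⟨⟨1, 1⟩⟩
instance : Inv (WrE G ι) := ⟨fun p => ⟨fun i => (p.g (p.s i))⁻¹, p.s⁻¹⟩⟩

@[simp] lemma mul_g (p q : WrE G ι) : (p * q).g = fun i => p.g i * q.g (p.s⁻¹ i) := rfl
@[simp] lemma mul_s (p q : WrE G ι) : (p * q).s = p.s * q.s := rfl
@[simp] lemma one_g : (1 : WrE G ι).g = 1 := rfl
@[simp] lemma one_s : (1 : WrE G ι).s = 1 := rfl
@[simp] lemma inv_g (p : WrE G ι) : p⁻¹.g = fun i => (p.g (p.s i))⁻¹ := rfl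
@[simp] lemma inv_s (p : WrE G ι) : p⁻¹.s = p.s⁻¹ := rfl

instance : Group (WrE G ι) where
  mul_assoc p q t := by
    ext i
    · simp [mul_assoc, Equiv.Perm.mul_apply]
    · simp [mul_assoc]
  one_mul p := by ext i <;> simp
  mul_one p := by ext i <;> simp
  inv_mul_cancel p := by
    ext i
    · simp
    · simp

variable {X : Type*} [MulAction G X]

instance : SMul (WrE G ι) (ι → X) := ⟨fun p x => fun i => p.g i • x (p.s⁻¹ i)⟩

@[simp] lemma smul_apply (p : WrE G ι) (x : ι → X) (i : ι) :
    (p • x) i = p.g i • x (p.s⁻¹ i) := rfl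

instance : MulAction (WrE G ι) (ι → X) where
  one_smul x := by funext i; simp
  mul_smul p q x := by
    funext i
    simp [mul_smul, Equiv.Perm.mul_apply]

/-- `Wr G n` is the same as `WrE G (Fin n)`. -/
def ofWr {n : ℕ} : Wr G n ≃* WrE G (Fin n) where
  toFun p := ⟨p.g, p.s⟩
  invFun p := ⟨p.g, p.s⟩
  left_inv p := rfl
  right_inv p := rfl
  map_mul' p q := rfl

@[simp] lemma ofWr_smul {n : ℕ} (p : Wr G n) (x : Fin n → X) :
    (ofWr p : WrE G (Fin n)) • x = p • x := rfl


lemma permCongr_inv_apply (e : ι ≃ κ) (p : Equiv.Perm ι) (k : κ) :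
    (e.permCongr p).symm k = e (p.symm (e.symm k)) := by
  rw [Equiv.symm_apply_eq]; simp

/-- Relabelling the index set gives isomorphic wreath products. -/
def relabel (e : ι ≃ κ) : WrE G ι ≃* WrE G κ where
  toFun p := ⟨fun k => p.g (e.symm k), e.permCongr p.s⟩
  invFun p := ⟨fun i => p.g (e i), e.symm.permCongr p.s⟩
  left_inv p := by
    ext i
    · simp
    · simp [Equiv.permCongr_apply]
  right_inv p := by
    ext k
    · simp
    · simp [Equiv.permCongr_apply]
  map_mul' p q := by
    ext k
    · simp [Equiv.Perm.inv_def, permCongr_inv_apply]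
    · simp [Equiv.permCongr_apply, Equiv.Perm.mul_apply]

@[simp] lemma relabel_g (e : ι ≃ κ) (p : WrE G ι) (k : κ) :
    (relabel e p).g k = p.g (e.symm k) := rfl

@[simp] lemma relabel_s (e : ι ≃ κ) (p : WrE G ι) :
    (relabel e p).s = e.permCongr p.s := rfl

lemma relabel_s_inv_apply (e : ι ≃ κ) (p : WrE G ι) (k : κ) :
    (relabel e p).s⁻¹ k = e (p.s⁻¹ (e.symm k)) := by
  simp [Equiv.Perm.inv_def, permCongr_inv_apply]

end WrE

end ZetaAux
namespace ZetaAux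

/-! ### The set of pairs `(φ, fixed point)` -/

variable (A : Type*) [Group A]

/-- The set of pairs `(φ : A →* H, x a fixed point of φ(A))`. -/
def P (H Z : Type*) [Group H] [MulAction H Z] : Type _ :=
  Σ φ : A →* H, {x : Z // ∀ a : A, φ a • x = x}

variable {A}

lemma P.ext {H Z : Type*} [Group H] [MulAction H Z] {t t' : P A H Z}
    (h1 : t.1 = t'.1) (h2 : t.2.1 = t'.2.1) : t = t' := by
  obtain ⟨φ, x, hx⟩ := t
  obtain ⟨φ', x', hx'⟩ := t'
  dsimp at h1 h2
  subst h1
  subst h2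
  rfl

lemma finite_P [Group.FG A] {H Z : Type*} [Group H] [Finite H] [MulAction H Z] [Finite Z] :
    Finite (P A H Z) := by
  haveI := finite_hom A H
  exact inferInstanceAs (Finite (Σ φ : A →* H, {x : Z // ∀ a : A, φ a • x = x}))

variable (A)

/-- Transport of pair sets along a compatible pair of isomorphisms. -/
def P.congr {H K Z W : Type*} [Group H] [Group K] [MulAction H Z] [MulAction K W]
    (f : H ≃* K) (e : Z ≃ W) (he : ∀ (h : H) (z : Z), e (h • z) = f h • e z) :
    P A H Z ≃ P A K W where
  toFun t := ⟨f.toMonoidHom.comp t.1, e t.2.1, fun a => by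
    have := t.2.2 a
    simp only [MonoidHom.comp_apply, MulEquiv.coe_toMonoidHom]
    rw [← he, this]⟩
  invFun t := ⟨f.symm.toMonoidHom.comp t.1, e.symm t.2.1, fun a => by
    have := t.2.2 a
    apply e.injective
    simp only [MonoidHom.comp_apply, MulEquiv.coe_toMonoidHom]
    rw [he]
    simp [this]⟩
  left_inv t := P.ext (by ext a; simp) (by simp)
  right_inv t := P.ext (by ext a; simp) (by simp)

variable {G : Type*} [Group G] {ι κ : Type*} {Z : Type*} [MulAction G Z]

/-- Reindexing pair sets for wreath actions on function types. -/
def P.reindex (e : ι ≃ κ) :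
    P A (WrE G ι) (ι → Z) ≃ P A (WrE G κ) (κ → Z) :=
  P.congr A (WrE.relabel e)
    ⟨fun x => x ∘ e.symm, fun x => x ∘ e, fun x => by funext i; simp, fun x => by funext k; simp⟩
    (by
      intro p x
      funext k
      simp only [Equiv.coe_fn_mk, Function.comp_apply, WrE.smul_apply, WrE.relabel_g]
      rw [WrE.relabel_s_inv_apply]
      simp)

/-- Moving between `Wr G n` and `WrE G (Fin n)` pair sets. -/
def P.toWr (n : ℕ) : P A (WrE G (Fin n)) (Fin n → Z) ≃ P A (Wr G n) (Fin n → Z) :=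
  (P.congr A (WrE.ofWr (G := G) (n := n)) (Equiv.refl _) (fun p x => rfl)).symm

end ZetaAux
namespace ZetaAux

/-! ### Invariant subsets as `G`-sets -/

section Sub

variable {G X : Type*} [Group G] [MulAction G X]

/-- Type synonym for an invariant subset, carrying the invariance proof in its type. -/
def Sub (Y : Set X) (hY : ∀ (g : G) (x : X), x ∈ Y → g • x ∈ Y) : Type _ := ↥Y

instance (Y : Set X) (hY : ∀ (g : G) (x : X), x ∈ Y → g • x ∈ Y) : MulAction G (Sub Y hY) :=
  setMulAction Y hY

instance (Y : Set X) (hY : ∀ (g : G) (x : X), x ∈ Y → g • x ∈ Y) [Finite X] :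
    Finite (Sub Y hY) :=
  inferInstanceAs (Finite ↥Y)

@[simp] lemma Sub.smul_val {Y : Set X} {hY : ∀ (g : G) (x : X), x ∈ Y → g • x ∈ Y}
    (g : G) (y : Sub Y hY) : (g • y).1 = g • y.1 := rfl

end Sub

/-! ### Splitting pairs along an invariant subset -/

section Split

variable {A : Type*} [Group A] {G X : Type*} [Group G] [MulAction G X]
variable (Y : Set X) (hY : ∀ (g : G) (x : X), x ∈ Y → g • x ∈ Y)
variable {ι : Type*} (q : ι → Prop) [DecidablePred q]

include hY in
lemma pattern_pres (φ : A →* WrE G ι) (x : ι → X) (hx : ∀ a, φ a • x = x)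
    (a : A) (i : ι) : x ((φ a).s⁻¹ i) ∈ Y ↔ x i ∈ Y := by
  have h1 : x i = (φ a).g i • x ((φ a).s⁻¹ i) := (congrFun (hx a) i).symm
  constructor
  · intro h; rw [h1]; exact hY _ _ h
  · intro h
    have h2 : x ((φ a).s⁻¹ i) = ((φ a).g i)⁻¹ • x i := by rw [h1]; simp
    rw [h2]; exact hY _ _ h

variable {Y}

/-- Restriction of a wreath-type homomorphism to a pattern-preserved subset. -/
def sideHom (φ : A →* WrE G ι) (hpres : ∀ (a : A) (i : ι), q ((φ a).s⁻¹ i) ↔ q i) :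
    A →* WrE G {i // q i} where
  toFun a := ⟨fun j => (φ a).g j.1,
    (φ a).s.subtypePerm (fun j => by simpa using (hpres a ((φ a).s j)).symm)⟩
  map_one' := by
    ext j
    · show (φ 1).g j.1 = 1
      rw [map_one]; rfl
    · show ((φ 1).s j.1 : ι) = j.1
      rw [map_one]; rfl
  map_mul' a b := by
    ext j
    · show (φ (a * b)).g j.1 = _
      rw [map_mul]
      simp [Equiv.Perm.inv_subtypePerm, Equiv.Perm.subtypePerm_apply]
    · show ((φ (a * b)).s j.1 : ι) = _
      rw [map_mul]
      simp [Equiv.Perm.subtypePerm_apply, Equiv.Perm.mul_apply]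
      rfl

@[simp] lemma sideHom_g (φ : A →* WrE G ι) (hpres) (a : A) (j : {i // q i}) :
    (sideHom q φ hpres a).g j = (φ a).g j.1 := rfl

lemma subtypePerm_inv_val (s : Equiv.Perm ι) (h : ∀ x, q (s x) ↔ q x) (j : {i // q i}) :
    ((((s.subtypePerm h))⁻¹ j : {i // q i}) : ι) = s⁻¹ j.1 := by
  simp [Equiv.Perm.inv_subtypePerm, Equiv.Perm.subtypePerm_apply]

lemma sideHom_s_inv_val (φ : A →* WrE G ι) (hpres) (a : A) (j : {i // q i}) :
    (((sideHom q φ hpres a).s⁻¹ j : {i // q i}) : ι) = (φ a).s⁻¹ j.1 := by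
  exact subtypePerm_inv_val q ((φ a).s)
    (fun j => by simpa using (hpres a ((φ a).s j)).symm) j

/-- Combining two wreath-type homomorphisms on complementary subsets. -/
def combineHom (ψ₁ : A →* WrE G {i // q i}) (ψ₂ : A →* WrE G {i // ¬ q i}) :
    A →* WrE G ι where
  toFun a := ⟨fun i => if h : q i then (ψ₁ a).g ⟨i, h⟩ else (ψ₂ a).g ⟨i, h⟩,
    Equiv.Perm.subtypeCongr (ψ₁ a).s (ψ₂ a).s⟩
  map_one' := by
    ext i
    · show (if h : q i then (ψ₁ 1).g ⟨i, h⟩ else (ψ₂ 1).g ⟨i, h⟩) = 1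
      rw [map_one, map_one]
      by_cases h : q i <;> simp [h]
    · show Equiv.Perm.subtypeCongr (ψ₁ 1).s (ψ₂ 1).s i = i
      rw [map_one, map_one]
      show Equiv.Perm.subtypeCongr (1 : Equiv.Perm {i // q i}) (1 : Equiv.Perm {i // ¬ q i}) i = i
      rw [show (1 : Equiv.Perm {i // q i}) = Equiv.refl _ from rfl,
        show (1 : Equiv.Perm {i // ¬ q i}) = Equiv.refl _ from rfl,
        Equiv.Perm.subtypeCongr.refl]
      rfl
  map_mul' a b := by
    have hinv₁ : ∀ (a : A) (i : ι) (h : q i),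
        (Equiv.Perm.subtypeCongr (ψ₁ a).s (ψ₂ a).s)⁻¹ i = ((ψ₁ a).s⁻¹ ⟨i, h⟩ : {i // q i}) := by
      intro a i h
      show (Equiv.Perm.subtypeCongr (ψ₁ a).s (ψ₂ a).s).symm i = _
      rw [Equiv.Perm.subtypeCongr.symm]
      exact Equiv.Perm.subtypeCongr.left_apply _ _ h
    have hinv₂ : ∀ (a : A) (i : ι) (h : ¬ q i),
        (Equiv.Perm.subtypeCongr (ψ₁ a).s (ψ₂ a).s)⁻¹ i = ((ψ₂ a).s⁻¹ ⟨i, h⟩ : {i // ¬ q i}) := by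
      intro a i h
      show (Equiv.Perm.subtypeCongr (ψ₁ a).s (ψ₂ a).s).symm i = _
      rw [Equiv.Perm.subtypeCongr.symm]
      exact Equiv.Perm.subtypeCongr.right_apply _ _ h
    ext i
    · show (if h : q i then (ψ₁ (a * b)).g ⟨i, h⟩ else (ψ₂ (a * b)).g ⟨i, h⟩) = _
      rw [map_mul, map_mul]
      show _ = (fun i => if h : q i then (ψ₁ a).g ⟨i, h⟩ else (ψ₂ a).g ⟨i, h⟩) i *
        (fun i => if h : q i then (ψ₁ b).g ⟨i, h⟩ else (ψ₂ b).g ⟨i, h⟩)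
          ((Equiv.Perm.subtypeCongr (ψ₁ a).s (ψ₂ a).s)⁻¹ i)
      dsimp only [WrE.mul_g]
      by_cases h : q i
      · rw [dif_pos h, dif_pos h, hinv₁ a i h, dif_pos ((ψ₁ a).s⁻¹ ⟨i, h⟩).2]
      · rw [dif_neg h, dif_neg h, hinv₂ a i h, dif_neg (((ψ₂ a).s⁻¹ ⟨i, h⟩).2 : ¬ q _)]
    · show Equiv.Perm.subtypeCongr (ψ₁ (a * b)).s (ψ₂ (a * b)).s i = _
      rw [map_mul, map_mul]
      show Equiv.Perm.subtypeCongr ((ψ₁ a).s * (ψ₁ b).s) ((ψ₂ a).s * (ψ₂ b).s) i =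
        (Equiv.Perm.subtypeCongr (ψ₁ a).s (ψ₂ a).s)
          ((Equiv.Perm.subtypeCongr (ψ₁ b).s (ψ₂ b).s) i)
      by_cases h : q i
      · rw [Equiv.Perm.subtypeCongr.left_apply _ _ h, Equiv.Perm.subtypeCongr.left_apply _ _ h,
          Equiv.Perm.subtypeCongr.left_apply_subtype]
        rfl
      · rw [Equiv.Perm.subtypeCongr.right_apply _ _ h, Equiv.Perm.subtypeCongr.right_apply _ _ h,
          Equiv.Perm.subtypeCongr.right_apply_subtype]
        rfl

@[simp] lemma combineHom_g (ψ₁ : A →* WrE G {i // q i}) (ψ₂ : A →* WrE G {i // ¬ q i})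
    (a : A) (i : ι) :
    (combineHom q ψ₁ ψ₂ a).g i = if h : q i then (ψ₁ a).g ⟨i, h⟩ else (ψ₂ a).g ⟨i, h⟩ := rfl

@[simp] lemma combineHom_s (ψ₁ : A →* WrE G {i // q i}) (ψ₂ : A →* WrE G {i // ¬ q i}) (a : A) :
    (combineHom q ψ₁ ψ₂ a).s = Equiv.Perm.subtypeCongr (ψ₁ a).s (ψ₂ a).s := rfl

end Split

end ZetaAux
namespace ZetaAux

section SplitEquiv

variable {A : Type*} [Group A] {G X : Type*} [Group G] [MulAction G X]
variable (Y : Set X) (hY : ∀ (g : G) (x : X), x ∈ Y → g • x ∈ Y)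
variable {ι : Type*} (q : ι → Prop) [DecidablePred q]

lemma subtypeCongr_inv_left (ep : Equiv.Perm {i // q i}) (en : Equiv.Perm {i // ¬ q i})
    {i : ι} (h : q i) :
    (Equiv.Perm.subtypeCongr ep en)⁻¹ i = (ep⁻¹ ⟨i, h⟩ : {i // q i}) := by
  show (Equiv.Perm.subtypeCongr ep en).symm i = _
  rw [Equiv.Perm.subtypeCongr.symm]
  exact Equiv.Perm.subtypeCongr.left_apply _ _ h

lemma subtypeCongr_inv_right (ep : Equiv.Perm {i // q i}) (en : Equiv.Perm {i // ¬ q i})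
    {i : ι} (h : ¬ q i) :
    (Equiv.Perm.subtypeCongr ep en)⁻¹ i = (en⁻¹ ⟨i, h⟩ : {i // ¬ q i}) := by
  show (Equiv.Perm.subtypeCongr ep en).symm i = _
  rw [Equiv.Perm.subtypeCongr.symm]
  exact Equiv.Perm.subtypeCongr.right_apply _ _ h

variable (A)

/-- The splitting of the pair set of `X` along an invariant subset `Y` and a
pattern `q` on the index set. -/
noncomputable def splitEquiv :
    {t : P A (WrE G ι) (ι → X) // ∀ i, t.2.1 i ∈ Y ↔ q i} ≃
      P A (WrE G {i // q i}) ({i // q i} → Sub Y hY) ×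
      P A (WrE G {i // ¬ q i}) ({i // ¬ q i} → Sub Yᶜ (compl_invariant Y hY)) where
  toFun t :=
    have hpres : ∀ (a : A) (i : ι), q ((t.1.1 a).s⁻¹ i) ↔ q i := fun a i => by
      rw [← t.2 i, ← t.2 ((t.1.1 a).s⁻¹ i)]
      exact pattern_pres Y hY t.1.1 t.1.2.1 t.1.2.2 a i
    have hpres' : ∀ (a : A) (i : ι), ¬ q ((t.1.1 a).s⁻¹ i) ↔ ¬ q i := fun a i =>
      (hpres a i).not
    (⟨sideHom q t.1.1 hpres,
      fun j => (⟨t.1.2.1 j.1, (t.2 j.1).mpr j.2⟩ : Sub Y hY),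
      by
        intro a
        funext j
        apply Subtype.ext
        show (t.1.1 a).g j.1 •
          t.1.2.1 (((sideHom q t.1.1 hpres a).s⁻¹ j : {i // q i}) : ι) = t.1.2.1 j.1
        rw [sideHom_s_inv_val]
        exact congrFun (t.1.2.2 a) j.1⟩,
     ⟨sideHom (fun i => ¬ q i) t.1.1 hpres',
      fun j => (⟨t.1.2.1 j.1, fun hmem => j.2 ((t.2 j.1).mp hmem)⟩ :
        Sub Yᶜ (compl_invariant Y hY)),
      by
        intro a
        funext j
        apply Subtype.ext
        show (t.1.1 a).g j.1 •
          t.1.2.1 (((sideHom (fun i => ¬ q i) t.1.1 hpres' a).s⁻¹ j : {i // ¬ q i}) : ι) =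
            t.1.2.1 j.1
        rw [sideHom_s_inv_val]
        exact congrFun (t.1.2.2 a) j.1⟩)
  invFun u :=
    ⟨⟨combineHom q u.1.1 u.2.1,
      fun i => if h : q i then (u.1.2.1 ⟨i, h⟩).1 else (u.2.2.1 ⟨i, h⟩).1,
      by
        intro a
        funext i
        rw [WrE.smul_apply]
        beta_reduce
        by_cases h : q i
        · rw [combineHom_s, subtypeCongr_inv_left q _ _ h]
          have hq : q (((u.1.1 a).s⁻¹ ⟨i, h⟩ : {i // q i}) : ι) := ((u.1.1 a).s⁻¹ ⟨i, h⟩).2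
          rw [dif_pos hq, dif_pos h]
          show (combineHom q u.1.1 u.2.1 a).g i • (u.1.2.1 ((u.1.1 a).s⁻¹ ⟨i, h⟩)).1 =
            (u.1.2.1 ⟨i, h⟩).1
          rw [combineHom_g, dif_pos h]
          exact congrArg Subtype.val (congrFun (u.1.2.2 a) ⟨i, h⟩)
        · rw [combineHom_s, subtypeCongr_inv_right q _ _ h]
          have hq : ¬ q (((u.2.1 a).s⁻¹ ⟨i, h⟩ : {i // ¬ q i}) : ι) := ((u.2.1 a).s⁻¹ ⟨i, h⟩).2
          rw [dif_neg hq, dif_neg h]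
          show (combineHom q u.1.1 u.2.1 a).g i • (u.2.2.1 ((u.2.1 a).s⁻¹ ⟨i, h⟩)).1 =
            (u.2.2.1 ⟨i, h⟩).1
          rw [combineHom_g, dif_neg h]
          exact congrArg Subtype.val (congrFun (u.2.2.2 a) ⟨i, h⟩)⟩,
      by
        intro i
        dsimp only
        by_cases h : q i
        · rw [dif_pos h]
          simpa [h] using (u.1.2.1 ⟨i, h⟩).2
        · rw [dif_neg h]
          have := (u.2.2.1 ⟨i, h⟩).2
          rw [Set.mem_compl_iff] at this
          simpa [h] using this⟩
  left_inv t := by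
    apply Subtype.ext
    apply P.ext
    · apply MonoidHom.ext
      intro a
      apply WrE.ext
      · funext i
        rw [combineHom_g]
        by_cases h : q i
        · rw [dif_pos h]; rfl
        · rw [dif_neg h]; rfl
      · apply Equiv.ext
        intro i
        rw [combineHom_s]
        by_cases h : q i
        · rw [Equiv.Perm.subtypeCongr.left_apply _ _ h]; rfl
        · rw [Equiv.Perm.subtypeCongr.right_apply _ _ h]; rfl
    · funext i
      show (if h : q i then _ else _) = t.1.2.1 i
      by_cases h : q i
      · rw [dif_pos h]
      · rw [dif_neg h]
  right_inv u := by
    obtain ⟨⟨ψ₁, y, h₁⟩, ⟨ψ₂, z, h₂⟩⟩ := u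
    refine Prod.ext ?_ ?_
    · apply P.ext
      · apply MonoidHom.ext
        intro a
        apply WrE.ext
        · funext j
          show (combineHom q ψ₁ ψ₂ a).g j.1 = (ψ₁ a).g j
          rw [combineHom_g, dif_pos j.2]
        · apply Equiv.ext
          intro j
          apply Subtype.ext
          show ((combineHom q ψ₁ ψ₂ a).s j.1 : ι) = ((ψ₁ a).s j : ι)
          rw [combineHom_s, Equiv.Perm.subtypeCongr.left_apply _ _ j.2]
      · funext j
        apply Subtype.ext
        show (if h : q j.1 then (y ⟨j.1, h⟩).1 else _) = (y j).1
        rw [dif_pos j.2]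
    · apply P.ext
      · apply MonoidHom.ext
        intro a
        apply WrE.ext
        · funext j
          show (combineHom q ψ₁ ψ₂ a).g j.1 = (ψ₂ a).g j
          rw [combineHom_g, dif_neg j.2]
        · apply Equiv.ext
          intro j
          apply Subtype.ext
          show ((combineHom q ψ₁ ψ₂ a).s j.1 : ι) = ((ψ₂ a).s j : ι)
          rw [combineHom_s, Equiv.Perm.subtypeCongr.right_apply _ _ j.2]
      · funext j
        apply Subtype.ext
        show (if h : q j.1 then _ else (z ⟨j.1, h⟩).1) = (z j).1
        rw [dif_neg j.2]

end SplitEquiv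

end ZetaAux
namespace ZetaAux

/-! ### Counting -/

section Count

variable (A : Type*) [Group A] [Group.FG A] {G : Type*} [Group G] [Finite G]

def wrProdEquiv (m : ℕ) : Wr G m ≃ (Fin m → G) × Equiv.Perm (Fin m) :=
  ⟨fun p => (p.g, p.s), fun q => ⟨q.1, q.2⟩, fun _ => rfl, fun _ => rfl⟩

instance (m : ℕ) : Finite (Wr G m) := Finite.of_equiv _ (wrProdEquiv (G := G) m).symm

lemma card_Wr (m : ℕ) : Nat.card (Wr G m) = Nat.card G ^ m * m.factorial := by
  classical
  rw [Nat.card_congr (wrProdEquiv (G := G) m), Nat.card_prod]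
  congr 1
  · letI := Fintype.ofFinite G
    simp [Nat.card_eq_fintype_card, Fintype.card_fun]
  · simp [Nat.card_eq_fintype_card, Fintype.card_perm]

lemma chiA_eq_card (m : ℕ) (Z : Type*) [MulAction G Z] [Finite Z] :
    chiA A (Wr G m) (Fin m → Z) =
      (Nat.card (Wr G m) : ℚ)⁻¹ * (Nat.card (P A (Wr G m) (Fin m → Z)) : ℚ) := by
  haveI := finite_hom A (Wr G m)
  letI : Fintype (A →* Wr G m) := Fintype.ofFinite _
  letI : ∀ φ : A →* Wr G m, Fintype {x : Fin m → Z // ∀ a : A, φ a • x = x} :=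
    fun φ => Fintype.ofFinite _
  rw [chiA, finsum_eq_sum_of_fintype]
  congr 1
  have h1 : Nat.card (P A (Wr G m) (Fin m → Z)) =
      Nat.card (Σ φ : A →* Wr G m, {x : Fin m → Z // ∀ a : A, φ a • x = x}) := rfl
  have h2 : Nat.card (P A (Wr G m) (Fin m → Z)) =
      ∑ φ : A →* Wr G m, Nat.card {x : Fin m → Z // ∀ a : A, φ a • x = x} := by
    rw [h1, Nat.card_eq_fintype_card, Fintype.card_sigma]
    exact Finset.sum_congr rfl (fun φ _ => (Nat.card_eq_fintype_card).symm)
  rw [h2]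
  push_cast
  rfl

variable {X : Type*} [MulAction G X] [Finite X]
variable (Y : Set X) (hY : ∀ (g : G) (x : X), x ∈ Y → g • x ∈ Y)

lemma card_split (n : ℕ) :
    Nat.card (P A (Wr G n) (Fin n → X)) =
      ∑ S : Finset (Fin n),
        Nat.card (P A (Wr G S.card) (Fin S.card → Sub Y hY)) *
          Nat.card (P A (Wr G (n - S.card))
            (Fin (n - S.card) → Sub Yᶜ (compl_invariant Y hY))) := by
  classical
  have eS : ∀ S : Finset (Fin n),
      {t : P A (WrE G (Fin n)) (Fin n → X) // ∀ i, t.2.1 i ∈ Y ↔ i ∈ S} ≃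
      (P A (Wr G S.card) (Fin S.card → Sub Y hY) ×
       P A (Wr G (n - S.card)) (Fin (n - S.card) → Sub Yᶜ (compl_invariant Y hY))) := by
    intro S
    have hc : Sᶜ.card = n - S.card := by
      rw [Finset.card_compl]
      simp
    refine (splitEquiv A Y hY (fun i => i ∈ S)).trans (Equiv.prodCongr ?_ ?_)
    · exact (P.reindex A ((S.orderIsoOfFin rfl).toEquiv.symm)).trans (P.toWr A S.card)
    · exact (P.reindex A (((Sᶜ.orderIsoOfFin hc).toEquiv.trans
        (Equiv.subtypeEquivRight (fun i => Finset.mem_compl))).symm)).trans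
        (P.toWr A (n - S.card))
  have hiff : ∀ (S : Finset (Fin n)) (t : P A (WrE G (Fin n)) (Fin n → X)),
      (Finset.univ.filter (fun i => t.2.1 i ∈ Y) = S) ↔ (∀ i, t.2.1 i ∈ Y ↔ i ∈ S) := by
    intro S t
    constructor
    · intro h i
      rw [← h]
      simp
    · intro h
      ext i
      simp [h i]
  have etot : P A (Wr G n) (Fin n → X) ≃
      Σ S : Finset (Fin n),
        (P A (Wr G S.card) (Fin S.card → Sub Y hY) ×
         P A (Wr G (n - S.card)) (Fin (n - S.card) → Sub Yᶜ (compl_invariant Y hY))) :=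
    (P.toWr A n).symm.trans
      ((Equiv.sigmaFiberEquiv
          (fun t : P A (WrE G (Fin n)) (Fin n → X) =>
            Finset.univ.filter (fun i => t.2.1 i ∈ Y))).symm.trans
        (Equiv.sigmaCongrRight
          (fun S => (Equiv.subtypeEquivRight (hiff S)).trans (eS S))))
  haveI : ∀ m : ℕ, ∀ (Z : Type _) (_ : MulAction G Z) (_ : Finite Z),
      Finite (P A (Wr G m) (Fin m → Z)) := fun m Z _ _ => finite_P
  haveI h₁ : ∀ S : Finset (Fin n), Finite (P A (Wr G S.card) (Fin S.card → Sub Y hY)) :=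
    fun S => finite_P
  haveI h₂ : ∀ S : Finset (Fin n), Finite (P A (Wr G (n - S.card))
      (Fin (n - S.card) → Sub Yᶜ (compl_invariant Y hY))) := fun S => finite_P
  letI : ∀ S : Finset (Fin n), Fintype (P A (Wr G S.card) (Fin S.card → Sub Y hY)) :=
    fun S => Fintype.ofFinite _
  letI : ∀ S : Finset (Fin n), Fintype (P A (Wr G (n - S.card))
      (Fin (n - S.card) → Sub Yᶜ (compl_invariant Y hY))) := fun S => Fintype.ofFinite _
  rw [Nat.card_congr etot, Nat.card_eq_fintype_card, Fintype.card_sigma]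
  exact Finset.sum_congr rfl (fun S _ => by
    rw [Fintype.card_prod, Nat.card_eq_fintype_card, Nat.card_eq_fintype_card])

end Count

end ZetaAux

/-- Multiplicativity of the zeta series over disjoint unions: for a `G`-invariant
subset `Y ⊆ X` and every `n`,
`χ^{(A)}(X^n, G_n) = Σ_{s=0}^{n} χ^{(A)}(Y^s, G_s) · χ^{(A)}((X∖Y)^{n−s}, G_{n−s})`,
where `G_n = G ≀ S_n` acts on `X^n` coordinatewise (twisted by the permutation);
equivalently `ζ^{(A)}_{(X,G)} = ζ^{(A)}_{(Y,G)} · ζ^{(A)}_{(X∖Y,G)}`. -/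
theorem chiA_wreath_multiplicative (A G X : Type*) [Group A] [Group.FG A] [Group G]
    [Finite G] [MulAction G X] [Finite X] (Y : Set X)
    (hY : ∀ (g : G) (x : X), x ∈ Y → g • x ∈ Y) (n : ℕ) :
    chiA A (Wr G n) (Fin n → X) =
      ∑ s ∈ Finset.range (n + 1),
        (letI := setMulAction Y hY; chiA A (Wr G s) (Fin s → Y)) *
        (letI := setMulAction Yᶜ (compl_invariant Y hY);
          chiA A (Wr G (n - s)) (Fin (n - s) → ↥(Yᶜ))) := by
  classical
  have h0 : ∀ m : ℕ, (Nat.card (Wr G m) : ℚ) ≠ 0 := by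
    intro m
    haveI : Nonempty (Wr G m) := ⟨1⟩
    exact Nat.cast_ne_zero.mpr (Nat.card_pos).ne'
  have hmul : ∀ s : ℕ, s ≤ n →
      Nat.card (Wr G s) * Nat.card (Wr G (n - s)) * n.choose s = Nat.card (Wr G n) := by
    intro s hs
    rw [ZetaAux.card_Wr, ZetaAux.card_Wr, ZetaAux.card_Wr]
    calc (Nat.card G ^ s * s.factorial) * (Nat.card G ^ (n - s) * (n - s).factorial) *
          n.choose s
        = (Nat.card G ^ s * Nat.card G ^ (n - s)) *
            (n.choose s * s.factorial * (n - s).factorial) := by ring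
      _ = Nat.card G ^ n * n.factorial := by
          rw [← pow_add, Nat.add_sub_cancel' hs, Nat.choose_mul_factorial_mul_factorial hs]
  have main : chiA A (Wr G n) (Fin n → X) =
      ∑ s ∈ Finset.range (n + 1),
        chiA A (Wr G s) (Fin s → ZetaAux.Sub Y hY) *
          chiA A (Wr G (n - s)) (Fin (n - s) → ZetaAux.Sub Yᶜ (compl_invariant Y hY)) := by
    rw [ZetaAux.chiA_eq_card A n X, ZetaAux.card_split A Y hY n]
    push_cast
    have hmaps : ∀ S : Finset (Fin n), S ∈ Finset.univ → S.card ∈ Finset.range (n + 1) := by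
      intro S _
      rw [Finset.mem_range, Nat.lt_succ_iff]
      exact le_trans (Finset.card_le_univ S) (by simp)
    rw [← Finset.sum_fiberwise_of_maps_to hmaps
      (fun S : Finset (Fin n) =>
        (Nat.card (ZetaAux.P A (Wr G S.card) (Fin S.card → ZetaAux.Sub Y hY)) : ℚ) *
          (Nat.card (ZetaAux.P A (Wr G (n - S.card))
            (Fin (n - S.card) → ZetaAux.Sub Yᶜ (compl_invariant Y hY))) : ℚ))]
    rw [Finset.mul_sum]
    refine Finset.sum_congr rfl (fun s hs => ?_)
    have hsle : s ≤ n := Nat.lt_succ_iff.mp (Finset.mem_range.mp hs)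
    have hinner : ∑ S ∈ Finset.univ.filter (fun S : Finset (Fin n) => S.card = s),
        ((Nat.card (ZetaAux.P A (Wr G S.card) (Fin S.card → ZetaAux.Sub Y hY)) : ℚ) *
          (Nat.card (ZetaAux.P A (Wr G (n - S.card))
            (Fin (n - S.card) → ZetaAux.Sub Yᶜ (compl_invariant Y hY))) : ℚ)) =
        (n.choose s : ℚ) *
          ((Nat.card (ZetaAux.P A (Wr G s) (Fin s → ZetaAux.Sub Y hY)) : ℚ) *
            (Nat.card (ZetaAux.P A (Wr G (n - s))
              (Fin (n - s) → ZetaAux.Sub Yᶜ (compl_invariant Y hY))) : ℚ)) := by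
      rw [Finset.sum_congr rfl (fun S hS => by
        rw [(Finset.mem_filter.mp hS).2])]
      rw [Finset.sum_const]
      have hcard : (Finset.univ.filter (fun S : Finset (Fin n) => S.card = s)).card =
          n.choose s := by
        rw [← Finset.powerset_univ, ← Finset.powersetCard_eq_filter,
          Finset.card_powersetCard, Finset.card_univ, Fintype.card_fin]
      rw [hcard, nsmul_eq_mul]
    rw [hinner, ZetaAux.chiA_eq_card A s (ZetaAux.Sub Y hY), ZetaAux.chiA_eq_card A (n - s) (ZetaAux.Sub Yᶜ (compl_invariant Y hY))]
    have hcast : (Nat.card (Wr G n) : ℚ) =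
        (Nat.card (Wr G s) : ℚ) * (Nat.card (Wr G (n - s)) : ℚ) * (n.choose s : ℚ) := by
      exact_mod_cast (hmul s hsle).symm
    rw [hcast]
    have hch : (n.choose s : ℚ) ≠ 0 := Nat.cast_ne_zero.mpr (Nat.choose_pos hsle).ne'
    have h0s := h0 s
    have h0ns := h0 (n - s)
    field_simp
  exact main
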